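/- arXiv:1502.03235 — 4 statements merged into one kernel-verified Lean document; each statement's English description precedes it below -/
import Mathlib

section
/- If G is the direct cosum of G' and G'' (disjoint union of vertex sets, with all edges of G', all edges of G'', and every vertex of G' joined to every vertex of G''), then ϑ(G) = max{ϑ(G'), ϑ(G'')}. -/
/-- The Lovász theta number of a graph `G`. -/
noncomputable def lovaszTheta {V : Type*} [Fintype V] (G : SimpleGraph V) : ℝ :=
  sSup {x : ℝ |
    ∃ (d : ℕ) (u : V → EuclideanSpace ℝ (Fin d)) (ψ : EuclideanSpace ℝ (Fin d)),
      (∀ i, ‖u i‖ = 1) ∧ ‖ψ‖ = 1 ∧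
      (∀ i j, G.Adj i j → @inner ℝ _ _ (u i) (u j) = 0) ∧
      x = ∑ i, (@inner ℝ _ _ ψ (u i)) ^ 2}

/-- The direct cosum (join) of two graphs: disjoint union of the vertex sets,
keeping all edges of both graphs and joining every vertex of the first
to every vertex of the second. -/
def graphJoin {V W : Type*} (G : SimpleGraph V) (H : SimpleGraph W) :
    SimpleGraph (V ⊕ W) where
  Adj x y := match x, y with
    | .inl u, .inl v => G.Adj u v
    | .inr u, .inr v => H.Adj u v
    | .inl _, .inr _ => True
    | .inr _, .inl _ => True
  symm := ⟨by rintro (u | u) (v | v) h <;> first | exact h.symm | trivial⟩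
  loopless := ⟨by rintro (u | u) h; exacts [G.irrefl h, H.irrefl h]⟩


/-- theta set -/
def tset {V : Type*} [Fintype V] (G : SimpleGraph V) : Set ℝ :=
  {x : ℝ |
    ∃ (d : ℕ) (u : V → EuclideanSpace ℝ (Fin d)) (ψ : EuclideanSpace ℝ (Fin d)),
      (∀ i, ‖u i‖ = 1) ∧ ‖ψ‖ = 1 ∧
      (∀ i j, G.Adj i j → @inner ℝ _ _ (u i) (u j) = 0) ∧
      x = ∑ i, (@inner ℝ _ _ ψ (u i)) ^ 2}

lemma zero_mem_tset {V : Type*} [Fintype V] (G : SimpleGraph V) : (0:ℝ) ∈ tset G := by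
  classical
  set n := Fintype.card V
  let e := Fintype.equivFin V
  refine ⟨n + 1, fun i => EuclideanSpace.single (Fin.castSucc (e i)) 1,
    EuclideanSpace.single (Fin.last n) 1, ?_, ?_, ?_, ?_⟩
  · intro i; simp [EuclideanSpace.norm_single]
  · simp [EuclideanSpace.norm_single]
  · intro i j hij
    have : e i ≠ e j := by simpa using hij.ne
    simp [EuclideanSpace.inner_single_left, EuclideanSpace.single_apply, Fin.castSucc_injective, this, hij.ne.symm]
  · symm
    apply Finset.sum_eq_zero
    intro i _
    have : Fin.last n ≠ Fin.castSucc (e i) := (Fin.castSucc_lt_last (e i)).ne'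
    simp [EuclideanSpace.inner_single_left, EuclideanSpace.single_apply, this.symm]

lemma tset_bddAbove {V : Type*} [Fintype V] (G : SimpleGraph V) :
    BddAbove (tset G) := by
  refine ⟨Fintype.card V, ?_⟩
  rintro x ⟨d, u, ψ, hu, hψ, -, rfl⟩
  calc ∑ i, (@inner ℝ _ _ ψ (u i)) ^ 2 ≤ ∑ _i : V, (1:ℝ) := by
        refine Finset.sum_le_sum fun i _ => ?_
        have h1 : |@inner ℝ _ _ ψ (u i)| ≤ 1 := by
          have := abs_real_inner_le_norm ψ (u i)
          rwa [hψ, hu i, one_mul] at this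
        calc (@inner ℝ _ _ ψ (u i)) ^ 2 = |@inner ℝ _ _ ψ (u i)| ^ 2 := (sq_abs _).symm
          _ ≤ 1 ^ 2 := by exact pow_le_pow_left₀ (abs_nonneg _) h1 2
          _ = 1 := one_pow 2
    _ = Fintype.card V := by simp

lemma lovaszTheta_eq {V : Type*} [Fintype V] (G : SimpleGraph V) :
    lovaszTheta G = sSup (tset G) := rfl

lemma lovaszTheta_nonneg {V : Type*} [Fintype V] (G : SimpleGraph V) :
    0 ≤ lovaszTheta G :=
  le_csSup (tset_bddAbove G) (zero_mem_tset G)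

section ext
variable {d n : ℕ}

/-- pack a function on a sum type into Euclidean space -/
def toE (F : Fin d ⊕ Fin n → ℝ) : EuclideanSpace ℝ (Fin (d + n)) :=
  WithLp.toLp 2 (fun k => F (finSumFinEquiv.symm k))

lemma inner_toE (F G : Fin d ⊕ Fin n → ℝ) :
    @inner ℝ _ _ (toE F) (toE G) = ∑ s, F s * G s := by
  rw [PiLp.inner_apply, ← Equiv.sum_comp finSumFinEquiv]
  simp [toE, RCLike.inner_apply, mul_comm]

lemma inner_toE_elim_left (f g : EuclideanSpace ℝ (Fin d)) :
    @inner ℝ _ _ (toE (Sum.elim f 0 : Fin d ⊕ Fin n → ℝ)) (toE (Sum.elim g 0)) =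
      @inner ℝ _ _ f g := by
  rw [inner_toE, Fintype.sum_sum_type, PiLp.inner_apply]
  simp [RCLike.inner_apply, mul_comm]

lemma norm_toE_elim_left (f : EuclideanSpace ℝ (Fin d)) (hf : ‖f‖ = 1) :
    ‖toE (Sum.elim f 0 : Fin d ⊕ Fin n → ℝ)‖ = 1 := by
  have h : @inner ℝ _ _ (toE (Sum.elim f 0 : Fin d ⊕ Fin n → ℝ)) (toE (Sum.elim f 0)) = 1 := by
    rw [inner_toE_elim_left, real_inner_self_eq_norm_sq, hf]; norm_num
  rw [real_inner_self_eq_norm_sq] at h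
  nlinarith [norm_nonneg (toE (Sum.elim f 0 : Fin d ⊕ Fin n → ℝ))]

end ext

lemma tset_subset_join_left {V W : Type*} [Fintype V] [Fintype W]
    (G' : SimpleGraph V) (G'' : SimpleGraph W) :
    tset G' ⊆ tset (graphJoin G' G'') := by
  classical
  rintro x ⟨d, u, ψ, hu, hψ, horth, rfl⟩
  set n := Fintype.card W
  let e := Fintype.equivFin W
  refine ⟨d + n, Sum.elim (fun i => toE (Sum.elim (u i) 0))
      (fun w => toE (Sum.elim 0 (Pi.single (e w) 1))),
    toE (Sum.elim ψ 0), ?_, norm_toE_elim_left ψ hψ, ?_, ?_⟩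
  · rintro (i | w)
    · exact norm_toE_elim_left (u i) (hu i)
    · simp only [Sum.elim_inr]
      have h : @inner ℝ _ _ (toE (Sum.elim (0 : Fin d → ℝ) (Pi.single (e w) 1)))
          (toE (Sum.elim 0 (Pi.single (e w) 1))) = 1 := by
        rw [inner_toE, Fintype.sum_sum_type]
        simp [Pi.single_apply, Finset.sum_ite_eq']
      rw [real_inner_self_eq_norm_sq] at h
      nlinarith [norm_nonneg (toE (Sum.elim (0 : Fin d → ℝ) (Pi.single (e w) 1)))]
  · rintro (i | w) (j | w') hadj <;> simp only [Sum.elim_inl, Sum.elim_inr]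
    · exact (inner_toE_elim_left (u i) (u j)).trans (horth i j hadj)
    · rw [inner_toE, Fintype.sum_sum_type]; simp
    · rw [inner_toE, Fintype.sum_sum_type]; simp
    · have hG : G''.Adj w w' := hadj
      have hww : w ≠ w' := hG.ne
      have hne : e w ≠ e w' := by simpa using hww
      rw [inner_toE, Fintype.sum_sum_type]
      simp [Pi.single_apply, Finset.sum_ite_eq', hne, hww.symm]
  · rw [Fintype.sum_sum_type]
    have h2 : ∀ w : W, @inner ℝ _ _ (toE (Sum.elim ψ 0))
        (toE (Sum.elim (0 : Fin d → ℝ) (Pi.single (e w) 1))) = 0 := by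
      intro w; rw [inner_toE, Fintype.sum_sum_type]; simp
    simp only [Sum.elim_inl, Sum.elim_inr, h2, inner_toE_elim_left]
    simp

lemma tset_subset_of_iso {V V₂ : Type*} [Fintype V] [Fintype V₂]
    {G : SimpleGraph V} {G₂ : SimpleGraph V₂} (e : V ≃ V₂)
    (h : ∀ a b, G.Adj a b → G₂.Adj (e a) (e b)) :
    tset G₂ ⊆ tset G := by
  rintro x ⟨d, u, ψ, hu, hψ, horth, rfl⟩
  refine ⟨d, fun i => u (e i), ψ, fun i => hu (e i), hψ,
    fun i j hij => horth (e i) (e j) (h i j hij), ?_⟩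
  rw [← Equiv.sum_comp e (fun i => (@inner ℝ _ _ ψ (u i)) ^ 2)]

lemma tset_subset_join_right {V W : Type*} [Fintype V] [Fintype W]
    (G' : SimpleGraph V) (G'' : SimpleGraph W) :
    tset G'' ⊆ tset (graphJoin G' G'') := by
  refine (tset_subset_join_left G'' G').trans (tset_subset_of_iso (Equiv.sumComm V W) ?_)
  rintro (a | a) (b | b) hab <;> exact hab

lemma sum_inner_sq_le {V : Type*} [Fintype V] (G : SimpleGraph V) {d : ℕ}
    (u : V → EuclideanSpace ℝ (Fin d)) (ψ ψ₁ : EuclideanSpace ℝ (Fin d))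
    (hu : ∀ i, ‖u i‖ = 1)
    (horth : ∀ i j, G.Adj i j → @inner ℝ _ _ (u i) (u j) = 0)
    (hproj : ∀ i, @inner ℝ _ _ ψ (u i) = @inner ℝ _ _ ψ₁ (u i)) :
    ∑ i, (@inner ℝ _ _ ψ (u i)) ^ 2 ≤ ‖ψ₁‖ ^ 2 * lovaszTheta G := by
  by_cases hz : ψ₁ = 0
  · have : ∀ i, @inner ℝ _ _ ψ (u i) = 0 := by
      intro i; rw [hproj i, hz, inner_zero_left]
    rw [Finset.sum_eq_zero (fun i _ => by rw [this i]; ring)]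
    exact mul_nonneg (by positivity) (lovaszTheta_nonneg G)
  · have hc : (0:ℝ) < ‖ψ₁‖ := norm_pos_iff.mpr hz
    have hmem : (∑ i, (@inner ℝ _ _ ((‖ψ₁‖)⁻¹ • ψ₁) (u i)) ^ 2) ∈ tset G := by
      refine ⟨d, u, (‖ψ₁‖)⁻¹ • ψ₁, hu, ?_, horth, rfl⟩
      rw [norm_smul, norm_inv, norm_norm, inv_mul_cancel₀ hc.ne']
    have hle : (∑ i, (@inner ℝ _ _ ((‖ψ₁‖)⁻¹ • ψ₁) (u i)) ^ 2) ≤ lovaszTheta G :=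
      le_csSup (tset_bddAbove G) hmem
    have hval : (∑ i, (@inner ℝ _ _ ((‖ψ₁‖)⁻¹ • ψ₁) (u i)) ^ 2)
        = (‖ψ₁‖ ^ 2)⁻¹ * ∑ i, (@inner ℝ _ _ ψ (u i)) ^ 2 := by
      rw [Finset.mul_sum]
      refine Finset.sum_congr rfl fun i _ => ?_
      rw [real_inner_smul_left, hproj i, mul_pow]
      ring
    rw [hval] at hle
    have := mul_le_mul_of_nonneg_left hle (le_of_lt (by positivity : (0:ℝ) < ‖ψ₁‖ ^ 2))
    rwa [← mul_assoc, mul_inv_cancel₀ (by positivity : (‖ψ₁‖:ℝ) ^ 2 ≠ 0), one_mul] at this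

lemma tset_join_le {V W : Type*} [Fintype V] [Fintype W]
    (G' : SimpleGraph V) (G'' : SimpleGraph W) :
    ∀ x ∈ tset (graphJoin G' G''), x ≤ max (lovaszTheta G') (lovaszTheta G'') := by
  rintro x ⟨d, u, ψ, hu, hψ, horth, rfl⟩
  set U₁ : Submodule ℝ (EuclideanSpace ℝ (Fin d)) :=
    Submodule.span ℝ (Set.range fun i : V => u (Sum.inl i)) with hU₁
  set U₂ : Submodule ℝ (EuclideanSpace ℝ (Fin d)) :=
    Submodule.span ℝ (Set.range fun w : W => u (Sum.inr w)) with hU₂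
  set ψ₁ : EuclideanSpace ℝ (Fin d) := (U₁.orthogonalProjectionOnto ψ : EuclideanSpace ℝ (Fin d))
    with hψ₁
  set ψ₂ : EuclideanSpace ℝ (Fin d) := (U₂.orthogonalProjectionOnto ψ : EuclideanSpace ℝ (Fin d))
    with hψ₂
  have hmem1 : ∀ i : V, u (Sum.inl i) ∈ U₁ :=
    fun i => Submodule.subset_span (Set.mem_range_self i)
  have hmem2 : ∀ w : W, u (Sum.inr w) ∈ U₂ :=
    fun w => Submodule.subset_span (Set.mem_range_self w)
  have hproj1 : ∀ i : V, @inner ℝ _ _ ψ (u (Sum.inl i)) = @inner ℝ _ _ ψ₁ (u (Sum.inl i)) := by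
    intro i
    have h0 := Submodule.starProjection_inner_eq_zero (K := U₁) ψ (u (Sum.inl i))
      (hmem1 i)
    rw [Submodule.starProjection_apply] at h0
    rw [inner_sub_left] at h0
    linarith
  have hproj2 : ∀ w : W, @inner ℝ _ _ ψ (u (Sum.inr w)) = @inner ℝ _ _ ψ₂ (u (Sum.inr w)) := by
    intro w
    have h0 := Submodule.starProjection_inner_eq_zero (K := U₂) ψ (u (Sum.inr w))
      (hmem2 w)
    rw [Submodule.starProjection_apply] at h0
    rw [inner_sub_left] at h0
    linarith
  have hOrtho : U₁ ⟂ U₂ := by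
    rw [hU₁, hU₂, Submodule.isOrtho_span]
    rintro _ ⟨i, rfl⟩ _ ⟨w, rfl⟩
    exact horth (Sum.inl i) (Sum.inr w) trivial
  have h12 : @inner ℝ _ _ ψ₁ ψ₂ = 0 :=
    hOrtho.inner_eq (U₁.orthogonalProjectionOnto ψ).2 (U₂.orthogonalProjectionOnto ψ).2
  have hψψ₁ : @inner ℝ _ _ ψ ψ₁ = ‖ψ₁‖ ^ 2 := by
    have h0 := Submodule.starProjection_inner_eq_zero (K := U₁) ψ ψ₁ (U₁.orthogonalProjectionOnto ψ).2
    rw [Submodule.starProjection_apply] at h0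
    rw [inner_sub_left] at h0
    rw [← real_inner_self_eq_norm_sq]
    linarith
  have hψψ₂ : @inner ℝ _ _ ψ ψ₂ = ‖ψ₂‖ ^ 2 := by
    have h0 := Submodule.starProjection_inner_eq_zero (K := U₂) ψ ψ₂ (U₂.orthogonalProjectionOnto ψ).2
    rw [Submodule.starProjection_apply] at h0
    rw [inner_sub_left] at h0
    rw [← real_inner_self_eq_norm_sq]
    linarith
  have hs : ‖ψ₁‖ ^ 2 + ‖ψ₂‖ ^ 2 ≤ 1 := by
    have hplus : @inner ℝ _ _ ψ (ψ₁ + ψ₂) = ‖ψ₁‖ ^ 2 + ‖ψ₂‖ ^ 2 := by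
      rw [inner_add_right, hψψ₁, hψψ₂]
    have hnormsum : ‖ψ₁ + ψ₂‖ ^ 2 = ‖ψ₁‖ ^ 2 + ‖ψ₂‖ ^ 2 := by
      rw [norm_add_sq_real, h12]; ring
    have hcs : @inner ℝ _ _ ψ (ψ₁ + ψ₂) ≤ ‖ψ‖ * ‖ψ₁ + ψ₂‖ := real_inner_le_norm ψ (ψ₁ + ψ₂)
    rw [hψ, one_mul, hplus] at hcs
    nlinarith [norm_nonneg (ψ₁ + ψ₂)]
  have hS : ∑ i : V, (@inner ℝ _ _ ψ (u (Sum.inl i))) ^ 2 ≤ ‖ψ₁‖ ^ 2 * lovaszTheta G' :=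
    sum_inner_sq_le G' (fun i => u (Sum.inl i)) ψ ψ₁ (fun i => hu _)
      (fun i j hij => horth (Sum.inl i) (Sum.inl j) hij) hproj1
  have hT : ∑ w : W, (@inner ℝ _ _ ψ (u (Sum.inr w))) ^ 2 ≤ ‖ψ₂‖ ^ 2 * lovaszTheta G'' :=
    sum_inner_sq_le G'' (fun w => u (Sum.inr w)) ψ ψ₂ (fun w => hu _)
      (fun i j hij => horth (Sum.inr i) (Sum.inr j) hij) hproj2
  rw [Fintype.sum_sum_type]
  have hm1 : lovaszTheta G' ≤ max (lovaszTheta G') (lovaszTheta G'') := le_max_left _ _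
  have hm2 : lovaszTheta G'' ≤ max (lovaszTheta G') (lovaszTheta G'') := le_max_right _ _
  have hm0 : 0 ≤ max (lovaszTheta G') (lovaszTheta G'') :=
    le_trans (lovaszTheta_nonneg G') hm1
  nlinarith [sq_nonneg ‖ψ₁‖, sq_nonneg ‖ψ₂‖]

/-- `ϑ` of the direct cosum of `G'` and `G''` is `max {ϑ(G'), ϑ(G'')}`. -/
theorem stmt_7 {V W : Type*} [Fintype V] [Fintype W]
    (G' : SimpleGraph V) (G'' : SimpleGraph W) :
    lovaszTheta (graphJoin G' G'') = max (lovaszTheta G') (lovaszTheta G'') := by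
  apply le_antisymm
  · rw [lovaszTheta_eq]
    exact csSup_le ⟨0, zero_mem_tset _⟩ (tset_join_le G' G'')
  · rw [max_le_iff]
    constructor
    · exact csSup_le_csSup (tset_bddAbove _) ⟨0, zero_mem_tset _⟩ (tset_subset_join_left G' G'')
    · exact csSup_le_csSup (tset_bddAbove _) ⟨0, zero_mem_tset _⟩ (tset_subset_join_right G' G'')
end

section
/- If T(G) is the twinning of G — two disjoint copies of G with each vertex of one copy joined to every neighbor (in G) of the corresponding vertex in the other copy — then ϑ(T(G)) = 2·ϑ(G). More generally, for any graph obtained from the disjoint union of two copies of G by adding a subset of the twinning edges, ϑ equals 2·ϑ(G). -/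
/-- The twinning `T(G)` of `G`: two copies of `G`, each vertex of one copy
joined to every neighbor of the corresponding vertex in the other copy:
`(u,a) ∼ (v,b)` iff `u ∼ v` in `G`. -/
def twinning {V : Type*} (G : SimpleGraph V) : SimpleGraph (V × Bool) where
  Adj p q := G.Adj p.1 q.1
  symm := ⟨fun _ _ h => h.symm⟩
  loopless := ⟨fun p h => G.irrefl h⟩

/-- The disjoint union of two copies of `G`, on the vertex set `V × Bool`. -/
def twoCopies {V : Type*} (G : SimpleGraph V) : SimpleGraph (V × Bool) where
  Adj p q := G.Adj p.1 q.1 ∧ p.2 = q.2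
  symm := ⟨fun _ _ h => ⟨h.1.symm, h.2.symm⟩⟩
  loopless := ⟨fun p h => G.irrefl h.1⟩


section Aux
variable {V : Type*} [Fintype V]




def thetaSet (G : SimpleGraph V) : Set ℝ :=
  {x : ℝ |
    ∃ (d : ℕ) (u : V → EuclideanSpace ℝ (Fin d)) (ψ : EuclideanSpace ℝ (Fin d)),
      (∀ i, ‖u i‖ = 1) ∧ ‖ψ‖ = 1 ∧
      (∀ i j, G.Adj i j → @inner ℝ _ _ (u i) (u j) = 0) ∧
      x = ∑ i, (@inner ℝ _ _ ψ (u i)) ^ 2}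

lemma zero_mem_thetaSet (G : SimpleGraph V) : (0:ℝ) ∈ thetaSet G := by
  classical
  set n := Fintype.card V
  let e := Fintype.equivFin V
  have hψu : ∀ i : V,
      (inner ℝ (EuclideanSpace.single (Fin.last n) (1:ℝ))
        (EuclideanSpace.single (e i).castSucc (1:ℝ)) : ℝ) = 0 := by
    intro i
    rw [EuclideanSpace.inner_single_left]
    simp only [EuclideanSpace.single_apply, conj_trivial, one_mul]
    rw [if_neg (Fin.castSucc_lt_last (e i)).ne']
  refine ⟨n+1, fun i => EuclideanSpace.single (e i).castSucc 1,
    EuclideanSpace.single (Fin.last n) 1, ?_, ?_, ?_, ?_⟩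
  · intro i; simp [EuclideanSpace.norm_single]
  · simp [EuclideanSpace.norm_single]
  · intro i j hij
    rw [EuclideanSpace.inner_single_left]
    simp only [EuclideanSpace.single_apply, conj_trivial, one_mul, Fin.castSucc_inj,
      EmbeddingLike.apply_eq_iff_eq]
    rw [if_neg hij.ne]
  · simp [hψu]

lemma bddAbove_thetaSet (G : SimpleGraph V) : BddAbove (thetaSet G) := by
  refine ⟨(Fintype.card V : ℝ), ?_⟩
  rintro x ⟨d, u, ψ, hu, hψ, -, rfl⟩
  calc ∑ i, (inner ℝ ψ (u i) : ℝ) ^ 2 ≤ ∑ _i : V, (1:ℝ) := by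
        refine Finset.sum_le_sum fun i _ => ?_
        have h := abs_real_inner_le_norm ψ (u i)
        rw [hψ, hu i, one_mul] at h
        calc (inner ℝ ψ (u i) : ℝ) ^ 2 = |(inner ℝ ψ (u i) : ℝ)| ^ 2 := (sq_abs _).symm
          _ ≤ 1 ^ 2 := by gcongr
          _ = 1 := one_pow 2
    _ = (Fintype.card V : ℝ) := by simp

lemma double_mem (G : SimpleGraph V) {H : SimpleGraph (V × Bool)}
    (hH : H ≤ twinning G) {x : ℝ} (hx : x ∈ thetaSet G) :
    2 * x ∈ thetaSet H := by
  obtain ⟨d, u, ψ, hu, hψ, horth, rfl⟩ := hx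
  refine ⟨d, fun p => u p.1, ψ, fun p => hu p.1, hψ, ?_, ?_⟩
  · intro p q hpq
    exact horth p.1 q.1 (hH hpq)
  · rw [Fintype.sum_prod_type]
    simp only [Fintype.sum_bool]
    rw [Finset.sum_add_distrib]
    ring

lemma split_mem (G : SimpleGraph V) {H : SimpleGraph (V × Bool)}
    (hH : twoCopies G ≤ H) {y : ℝ} (hy : y ∈ thetaSet H) :
    ∃ a b : ℝ, a ∈ thetaSet G ∧ b ∈ thetaSet G ∧ y = a + b := by
  obtain ⟨d, w, ψ, hw, hψ, horth, rfl⟩ := hy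
  refine ⟨∑ i, (inner ℝ ψ (w (i, false)) : ℝ) ^ 2, ∑ i, (inner ℝ ψ (w (i, true)) : ℝ) ^ 2,
    ⟨d, fun i => w (i, false), ψ, fun i => hw _, hψ,
      fun i j hij => horth _ _ (hH ⟨hij, rfl⟩), rfl⟩,
    ⟨d, fun i => w (i, true), ψ, fun i => hw _, hψ,
      fun i j hij => horth _ _ (hH ⟨hij, rfl⟩), rfl⟩, ?_⟩
  rw [Fintype.sum_prod_type]
  simp only [Fintype.sum_bool]
  rw [Finset.sum_add_distrib, add_comm]

lemma theta_eq (G : SimpleGraph V) : lovaszTheta G = sSup (thetaSet G) := rfl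

theorem gen_case {V : Type*} [Fintype V] (G : SimpleGraph V)
    (H : SimpleGraph (V × Bool)) (h1 : twoCopies G ≤ H) (h2 : H ≤ twinning G) :
    lovaszTheta H = 2 * lovaszTheta G := by
  rw [theta_eq, theta_eq]
  apply le_antisymm
  · refine csSup_le ⟨0, zero_mem_thetaSet H⟩ fun y hy => ?_
    obtain ⟨a, b, ha, hb, rfl⟩ := split_mem G h1 hy
    have h1' := le_csSup (bddAbove_thetaSet G) ha
    have h2' := le_csSup (bddAbove_thetaSet G) hb
    linarith
  · have : sSup (thetaSet G) ≤ sSup (thetaSet H) / 2 := by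
      refine csSup_le ⟨0, zero_mem_thetaSet G⟩ fun x hx => ?_
      have := le_csSup (bddAbove_thetaSet H) (double_mem G h2 hx)
      linarith
    linarith

end Aux

/-- `ϑ(T(G)) = 2 ϑ(G)`, and more generally any partial twinning (a graph
between the disjoint union of two copies of `G` and the twinning `T(G)` in the
edge-subset order) has Lovász number `2 ϑ(G)`. -/
theorem stmt_8 {V : Type*} [Fintype V] (G : SimpleGraph V) :
    lovaszTheta (twinning G) = 2 * lovaszTheta G ∧
    ∀ H : SimpleGraph (V × Bool), twoCopies G ≤ H → H ≤ twinning G →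
      lovaszTheta H = 2 * lovaszTheta G := by
  refine ⟨gen_case G _ (fun p q h => h.1) le_rfl, gen_case G⟩
end

section
/- (Exclusivity principle on two copies of C₅) If p : {0,...,4} → [0,1] is a constant distribution p_i = P on the pentagon, and the product distribution on two independent copies satisfies the exclusivity constraint ∑_{i=0}^{4} P² ≤ 1 (since the five paired events are pairwise exclusive), then P ≤ 1/√5 and hence ∑_i p_i ≤ √5. -/
/-- Exclusivity principle on two copies of the pentagon: if `p` is a constant
distribution `p i = P` on the five vertices and the exclusivity constraint on
the five pairwise exclusive paired events gives `∑_{i<5} P² ≤ 1`, then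
`P ≤ 1/√5` and hence `∑ i, p i ≤ √5`. -/
theorem stmt_12 (p : Fin 5 → ℝ) (P : ℝ) (hconst : ∀ i, p i = P)
    (h0 : 0 ≤ P) (h1 : P ≤ 1)
    (hE : ∑ _i : Fin 5, P ^ 2 ≤ 1) :
    P ≤ 1 / Real.sqrt 5 ∧ ∑ i : Fin 5, p i ≤ Real.sqrt 5 := by
  simp [Finset.sum_const] at hE
  have hs : (0:ℝ) < Real.sqrt 5 := Real.sqrt_pos.mpr (by norm_num)
  have hP : P ≤ 1 / Real.sqrt 5 := by
    rw [le_div_iff₀ hs]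
    nlinarith [Real.sq_sqrt (show (0:ℝ) ≤ 5 by norm_num), Real.sqrt_nonneg 5]
  refine ⟨hP, ?_⟩
  simp [hconst, Finset.sum_const]
  nlinarith [Real.sq_sqrt (show (0:ℝ) ≤ 5 by norm_num)]
end

section
/- (CHSH inequality) If A₁, A₂, B₁, B₂ are ±1-valued random variables on a common probability space, then E[A₁B₁] + E[A₁B₂] + E[A₂B₁] − E[A₂B₂] ≤ 2. -/
open MeasureTheory

lemma integrable_prod_pm {Ω : Type*} [MeasurableSpace Ω] (μ : Measure Ω)
    [IsProbabilityMeasure μ] (A B : Ω → ℝ) (hA : Measurable A) (hB : Measurable B)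
    (hAv : ∀ ω, A ω = 1 ∨ A ω = -1) (hBv : ∀ ω, B ω = 1 ∨ B ω = -1) :
    Integrable (fun ω => A ω * B ω) μ := by
  apply Integrable.mono' (integrable_const (1 : ℝ)) ((hA.mul hB).aestronglyMeasurable)
  filter_upwards with ω
  rcases hAv ω with h1 | h1 <;> rcases hBv ω with h2 | h2 <;> simp [h1, h2]

/-- The CHSH inequality: if `A₁, A₂, B₁, B₂` are `±1`-valued random variables
on a common probability space, then
`E[A₁B₁] + E[A₁B₂] + E[A₂B₁] − E[A₂B₂] ≤ 2`. -/
theorem stmt_13 {Ω : Type*} [MeasurableSpace Ω] (μ : Measure Ω)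
    [IsProbabilityMeasure μ]
    (A₁ A₂ B₁ B₂ : Ω → ℝ)
    (hA₁ : Measurable A₁) (hA₂ : Measurable A₂)
    (hB₁ : Measurable B₁) (hB₂ : Measurable B₂)
    (hA₁v : ∀ ω, A₁ ω = 1 ∨ A₁ ω = -1) (hA₂v : ∀ ω, A₂ ω = 1 ∨ A₂ ω = -1)
    (hB₁v : ∀ ω, B₁ ω = 1 ∨ B₁ ω = -1) (hB₂v : ∀ ω, B₂ ω = 1 ∨ B₂ ω = -1) :
    (∫ ω, A₁ ω * B₁ ω ∂μ) + (∫ ω, A₁ ω * B₂ ω ∂μ) +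
      (∫ ω, A₂ ω * B₁ ω ∂μ) - (∫ ω, A₂ ω * B₂ ω ∂μ) ≤ 2 := by
  have h11 := integrable_prod_pm μ A₁ B₁ hA₁ hB₁ hA₁v hB₁v
  have h12 := integrable_prod_pm μ A₁ B₂ hA₁ hB₂ hA₁v hB₂v
  have h21 := integrable_prod_pm μ A₂ B₁ hA₂ hB₁ hA₂v hB₁v
  have h22 := integrable_prod_pm μ A₂ B₂ hA₂ hB₂ hA₂v hB₂v
  have hs1 : Integrable (fun ω => A₁ ω * B₁ ω + A₁ ω * B₂ ω) μ := h11.add h12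
  have hs2 : Integrable (fun ω => A₁ ω * B₁ ω + A₁ ω * B₂ ω + A₂ ω * B₁ ω) μ := hs1.add h21
  rw [← integral_add h11 h12, ← integral_add hs1 h21, ← integral_sub hs2 h22]
  calc (∫ ω, A₁ ω * B₁ ω + A₁ ω * B₂ ω + A₂ ω * B₁ ω - A₂ ω * B₂ ω ∂μ)
      ≤ ∫ _ω, (2 : ℝ) ∂μ := by
        apply integral_mono (hs2.sub h22) (integrable_const 2)
        intro ω
        rcases hA₁v ω with a1 | a1 <;> rcases hA₂v ω with a2 | a2 <;>
          rcases hB₁v ω with b1 | b1 <;> rcases hB₂v ω with b2 | b2 <;>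
          simp [a1, a2, b1, b2] <;> norm_num
    _ = 2 := by simp
end
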